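/- For every β ∈ GF(r)*, the Hamming weight of the codeword c(β) = (Tr_{r/q}(βθ^j))_{j=0}^{n-1} in the irreducible cyclic code C(r,N) equals ((q-1)/(qN))·(r - 1 - N₂·η_{i(β)}^{(N₂,r)}) = ((q-1)/(qN))·(r - η*_{i(β)}^{(N₂,r)}). -/

import Mathlib

open scoped Classical

/-- The Gauss period `η_i^{(N,r)} = Σ_{x ∈ αⁱ·<α^N>} ζ_p^{Tr_{r/p}(x)}`. -/
noncomputable def gaussPeriod (p : ℕ) (F : Type) [Field F] [Fintype F]
    [Algebra (ZMod p) F] (α : Fˣ) (N i : ℕ) : ℂ :=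
  ∑ x ∈ Finset.univ.filter (fun x : Fˣ => ∃ j : ℕ, x = α ^ i * (α ^ N) ^ j),
    Complex.exp (2 * Real.pi * Complex.I *
      ((Algebra.trace (ZMod p) F (x : F)).val : ℂ) / (p : ℂ))

/-- The Hamming weight of the codeword `c(β) = (Tr_{r/q}(βθʲ))_{j=0}^{n-1}`. -/
noncomputable def codewordWeight (K F : Type) [Field K] [Field F] [Algebra K F]
    (θ : F) (n : ℕ) (β : F) : ℕ :=
  (Finset.univ.filter fun j : Fin n => Algebra.trace K F (β * θ ^ (j : ℕ)) ≠ 0).card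

noncomputable def eP (p : ℕ) (a : ZMod p) : ℂ :=
  Complex.exp (2 * Real.pi * Complex.I * (a.val : ℂ) / (p : ℂ))

lemma eNat_mod (p : ℕ) (hp : p ≠ 0) (w : ℕ) :
    Complex.exp (2 * Real.pi * Complex.I * ((w % p : ℕ) : ℂ) / (p : ℂ))
      = Complex.exp (2 * Real.pi * Complex.I * (w : ℂ) / (p : ℂ)) := by
  have hp' : (p : ℂ) ≠ 0 := Nat.cast_ne_zero.mpr hp
  have hw : (w : ℂ) = ((w % p : ℕ) : ℂ) + (p : ℂ) * ((w / p : ℕ) : ℂ) := by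
    have := Nat.mod_add_div w p
    exact_mod_cast congrArg (fun k : ℕ => (k : ℂ)) this.symm
  rw [hw]
  have : 2 * Real.pi * Complex.I * (((w % p : ℕ) : ℂ) + (p : ℂ) * ((w / p : ℕ) : ℂ)) / (p : ℂ)
      = 2 * Real.pi * Complex.I * ((w % p : ℕ) : ℂ) / (p : ℂ)
        + ((w / p : ℕ) : ℂ) * (2 * Real.pi * Complex.I) := by
    field_simp
  rw [this, Complex.exp_add]
  have h1 : Complex.exp (((w / p : ℕ) : ℂ) * (2 * Real.pi * Complex.I)) = 1 := by
    rw [Complex.exp_nat_mul, Complex.exp_two_pi_mul_I, one_pow]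
  rw [h1, mul_one]

lemma eP_add (p : ℕ) [NeZero p] (a b : ZMod p) : eP p (a + b) = eP p a * eP p b := by
  unfold eP
  rw [← Complex.exp_add, ZMod.val_add]
  rw [eNat_mod p (NeZero.ne p)]
  congr 1
  push_cast
  have hp' : (p : ℂ) ≠ 0 := Nat.cast_ne_zero.mpr (NeZero.ne p)
  field_simp

lemma eP_zero (p : ℕ) [NeZero p] : eP p 0 = 1 := by
  unfold eP
  simp [ZMod.val_zero]

lemma sum_char_eq_zero {K : Type} [Fintype K] [AddGroup K] (f : K → ℂ)
    (hadd : ∀ a b, f (a + b) = f a * f b) (y₀ : K) (h : f y₀ ≠ 1) :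
    ∑ y, f y = 0 := by
  have key : f y₀ * ∑ y, f y = ∑ y, f y := by
    rw [Finset.mul_sum]
    exact Fintype.sum_equiv (Equiv.addLeft y₀) _ _ (fun y => by rw [← hadd]; rfl)
  have : (f y₀ - 1) * ∑ y, f y = 0 := by linear_combination key
  rcases mul_eq_zero.mp this with h' | h'
  · exact absurd (sub_eq_zero.mp h') h
  · exact h'

lemma eP_ne_one (p : ℕ) (hp : p.Prime) (a : ZMod p) (ha : a ≠ 0) : eP p a ≠ 1 := by
  haveI : NeZero p := ⟨hp.ne_zero⟩
  unfold eP
  intro hcon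
  rw [Complex.exp_eq_one_iff] at hcon
  obtain ⟨k, hk⟩ := hcon
  have hp' : (p : ℂ) ≠ 0 := Nat.cast_ne_zero.mpr hp.ne_zero
  have h2 : (2 : ℂ) * Real.pi * Complex.I ≠ 0 := by
    simp [Real.pi_ne_zero, Complex.I_ne_zero]
  rw [div_eq_iff hp'] at hk
  have h3 : (2 * Real.pi * Complex.I) * (a.val : ℂ)
      = (2 * Real.pi * Complex.I) * ((k : ℂ) * (p : ℂ)) := by linear_combination hk
  have : (a.val : ℂ) = (k : ℂ) * (p : ℂ) := mul_left_cancel₀ h2 h3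
  have hz : (a.val : ℤ) = k * p := by exact_mod_cast this
  have hlt : a.val < p := ZMod.val_lt a
  have hne : a.val ≠ 0 := fun h0 => ha ((ZMod.val_eq_zero a).mp h0)
  have hdvd : (p : ℤ) ∣ (a.val : ℤ) := ⟨k, by linarith [hz]⟩
  have := Int.le_of_dvd (by exact_mod_cast Nat.pos_of_ne_zero hne) hdvd
  omega

lemma trace_nondeg (p : ℕ) (hp : p.Prime) (K : Type) [Field K] [Fintype K]
    [inst : Algebra (ZMod p) K] : ∃ b : K, Algebra.trace (ZMod p) K b ≠ 0 := by
  haveI : Fact p.Prime := ⟨hp⟩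
  haveI hch : CharP K p :=
    charP_of_injective_ringHom (algebraMap (ZMod p) K).injective p
  have hrc := ringChar.eq K p
  subst hrc
  obtain ⟨b, hb⟩ := FiniteField.trace_to_zmod_nondegenerate K (a := 1) one_ne_zero
  refine ⟨b, fun hcon => hb ?_⟩
  rw [one_mul]; exact hcon

lemma sum_eP_trace (p : ℕ) (hp : p.Prime) (K : Type) [Field K] [Fintype K]
    [Algebra (ZMod p) K] (t : K) :
    ∑ y : K, eP p (Algebra.trace (ZMod p) K (y * t))
      = if t = 0 then (Fintype.card K : ℂ) else 0 := by
  haveI : NeZero p := ⟨hp.ne_zero⟩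
  by_cases ht : t = 0
  · rw [if_pos ht]
    have : ∀ y : K, eP p (Algebra.trace (ZMod p) K (y * t)) = 1 := by
      intro y; rw [ht, mul_zero, map_zero, eP_zero]
    rw [Finset.sum_congr rfl (fun y _ => this y)]
    simp
  · rw [if_neg ht]
    have hadd : ∀ a b : K, eP p (Algebra.trace (ZMod p) K (a + b))
        = eP p (Algebra.trace (ZMod p) K a) * eP p (Algebra.trace (ZMod p) K b) := by
      intro a b; rw [map_add, eP_add]
    have hre : ∑ y : K, eP p (Algebra.trace (ZMod p) K (y * t))
        = ∑ u : K, eP p (Algebra.trace (ZMod p) K u) :=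
      Fintype.sum_equiv (Equiv.mulRight₀ t ht) _ _ (fun y => rfl)
    rw [hre]
    obtain ⟨b, hb⟩ := trace_nondeg p hp K
    exact sum_char_eq_zero _ hadd b (eP_ne_one p hp _ hb)

lemma card_fiber {G H : Type} [Group G] [Group H] [Fintype G] [DecidableEq H]
    (φ : G →* H) (b : H) (hb : b ∈ φ.range) :
    (Finset.univ.filter fun a => φ a = b).card = Nat.card φ.ker := by
  classical
  obtain ⟨x₀, hx₀⟩ := hb
  rw [Nat.card_eq_fintype_card, ← Fintype.card_subtype]
  refine Fintype.card_congr ⟨fun a => ⟨x₀⁻¹ * a.1, ?_⟩, fun k => ⟨x₀ * k.1, ?_⟩, ?_, ?_⟩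
  · have := a.2
    simp only [MonoidHom.mem_ker, map_mul, map_inv, hx₀, this, inv_mul_cancel]
  · have : φ k.1 = 1 := k.2
    simp [map_mul, hx₀, this]
  · intro a; ext; simp [mul_inv_cancel_left]
  · intro k; ext; simp [inv_mul_cancel_left]

lemma sum_comp_hom {G H : Type} [Group G] [Group H] [Fintype G] [Fintype H]
    [DecidableEq H] (φ : G →* H) (f : H → ℂ) :
    ∑ x : G, f (φ x) = (Nat.card φ.ker : ℂ) * ∑ y : φ.range, f (y : H) := by
  classical
  rw [Finset.sum_comp f φ]
  have himg : Finset.image φ Finset.univ = Finset.univ.filter (· ∈ φ.range) := by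
    ext b; simp [MonoidHom.mem_range, eq_comm]
  rw [himg]
  have h2 : ∑ y : φ.range, f (y : H)
      = ∑ y ∈ Finset.univ.filter (· ∈ φ.range), f y := by
    exact (Finset.sum_subtype _ (by simp) f).symm
  rw [h2, Finset.mul_sum]
  apply Finset.sum_congr rfl
  intro b hb
  rw [Finset.mem_filter] at hb
  rw [card_fiber φ b hb.2]
  rw [nsmul_eq_mul]

lemma zpowers_pow_sup {G : Type} [CommGroup G] (α : G) (a b : ℕ) :
    Subgroup.zpowers (α ^ a) ⊔ Subgroup.zpowers (α ^ b)
      = Subgroup.zpowers (α ^ Nat.gcd a b) := by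
  set g := Nat.gcd a b with hg
  apply le_antisymm
  · apply sup_le
    · rw [Subgroup.zpowers_le]
      exact Subgroup.mem_zpowers_iff.mpr ⟨(a / g : ℕ), by
        rw [zpow_natCast, ← pow_mul, Nat.mul_div_cancel' (Nat.gcd_dvd_left a b)]⟩
    · rw [Subgroup.zpowers_le]
      exact Subgroup.mem_zpowers_iff.mpr ⟨(b / g : ℕ), by
        rw [zpow_natCast, ← pow_mul, Nat.mul_div_cancel' (Nat.gcd_dvd_right a b)]⟩
  · rw [Subgroup.zpowers_le]
    have hbez : (g : ℤ) = a * Nat.gcdA a b + b * Nat.gcdB a b := Nat.gcd_eq_gcd_ab a b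
    have : α ^ g = (α ^ a) ^ Nat.gcdA a b * (α ^ b) ^ Nat.gcdB a b := by
      rw [← zpow_natCast α a, ← zpow_natCast α b, ← zpow_mul, ← zpow_mul, ← zpow_add,
        ← hbez, zpow_natCast]
    rw [this]
    exact mul_mem
      (Subgroup.mem_sup_left (Subgroup.zpow_mem _ (Subgroup.mem_zpowers _) _))
      (Subgroup.mem_sup_right (Subgroup.zpow_mem _ (Subgroup.mem_zpowers _) _))

lemma sum_field_eq_zero_add_units {K : Type} [Field K] [Fintype K] (g : K → ℂ) :
    ∑ y : K, g y = g 0 + ∑ u : Kˣ, g (u : K) := by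
  classical
  have h1 : ∑ u : Kˣ, g (u : K) = ∑ y ∈ Finset.univ.erase (0 : K), g y := by
    apply Finset.sum_bij (fun (u : Kˣ) _ => (u : K))
    · intro u _; exact Finset.mem_erase.mpr ⟨Units.ne_zero u, Finset.mem_univ _⟩
    · intro u₁ _ u₂ _ h; exact Units.ext h
    · intro y hy
      exact ⟨Units.mk0 y (Finset.mem_erase.mp hy).1, Finset.mem_univ _, rfl⟩
    · intro u _; rfl
  rw [h1]
  exact (Finset.add_sum_erase _ g (Finset.mem_univ 0)).symm

set_option maxHeartbeats 1600000 in
/-- `wt(c(β)) = ((q-1)/(qN))·(r-1-N₂·η_{i(β)}^{(N₂,r)})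
                           = ((q-1)/(qN))·(r-η*_{i(β)}^{(N₂,r)})`. -/
theorem stmt6 (p s m N q r n N₂ : ℕ) (hp : p.Prime) (hs : 0 < s) (hm : 0 < m)
    (hq : q = p ^ s) (hr : r = q ^ m) (hN : N ∣ r - 1) (hn : n = (r - 1) / N)
    (hN₂ : N₂ = Nat.gcd N ((r - 1) / (q - 1)))
    (K F : Type) [Field K] [Fintype K] [Field F] [Fintype F]
    [Algebra K F] [Algebra (ZMod p) F]
    (hcardK : Fintype.card K = q) (hcardF : Fintype.card F = r)
    (α : Fˣ) (hα : ∀ x : Fˣ, x ∈ Subgroup.zpowers α)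
    (hθ : ∀ x : F, x ∈ Algebra.adjoin K {((α ^ N : Fˣ) : F)})
    (β : Fˣ) (iβ : ℕ) (hiβ : ∃ j : ℕ, β = α ^ iβ * (α ^ N₂) ^ j) :
    (codewordWeight K F ((α ^ N : Fˣ) : F) n (β : F) : ℂ) =
        ((q : ℂ) - 1) / ((q : ℂ) * N) *
          ((r : ℂ) - 1 - (N₂ : ℂ) * gaussPeriod p F α N₂ iβ) ∧
      (codewordWeight K F ((α ^ N : Fˣ) : F) n (β : F) : ℂ) =
        ((q : ℂ) - 1) / ((q : ℂ) * N) *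
          ((r : ℂ) - (1 + (N₂ : ℂ) * gaussPeriod p F α N₂ iβ)) := by
  classical
  haveI : Fact p.Prime := ⟨hp⟩
  haveI : NeZero p := ⟨hp.ne_zero⟩
  -- numerology
  have hr2 : 2 ≤ r := by rw [← hcardF]; exact Fintype.one_lt_card
  have hq2 : 2 ≤ q := by rw [← hcardK]; exact Fintype.one_lt_card
  have hN0 : N ≠ 0 := by rintro rfl; rw [Nat.zero_dvd] at hN; omega
  have hdvdq : q - 1 ∣ r - 1 := by
    rw [hr]; simpa using Nat.sub_dvd_pow_sub_pow q 1 m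
  set e := (r - 1) / (q - 1) with he_def
  have he : e * (q - 1) = r - 1 := Nat.div_mul_cancel hdvdq
  have hedvd : e ∣ r - 1 := ⟨q - 1, he.symm⟩
  have he0 : e ≠ 0 := by intro h; rw [h] at he; omega
  have hnN : n * N = r - 1 := by rw [hn]; exact Nat.div_mul_cancel hN
  have hn0 : n ≠ 0 := by intro h; rw [h] at hnN; omega
  have hN₂N : N₂ ∣ N := hN₂ ▸ Nat.gcd_dvd_left _ _
  have hN₂r : N₂ ∣ r - 1 := hN₂N.trans hN
  have hN₂0 : N₂ ≠ 0 := fun h => hN0 (Nat.eq_zero_of_gcd_eq_zero_left (hN₂ ▸ h))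
  -- instances
  haveI hchF : CharP F p := charP_of_injective_ringHom (algebraMap (ZMod p) F).injective p
  haveI hchK : CharP K p := RingHom.charP (algebraMap K F) (algebraMap K F).injective p
  letI : Algebra (ZMod p) K := ZMod.algebra K p
  haveI : IsScalarTower (ZMod p) K F := IsScalarTower.of_algebraMap_eq (fun x => by
    rw [RingHom.ext_zmod (algebraMap (ZMod p) F)
      ((algebraMap K F).comp (algebraMap (ZMod p) K))]; rfl)
  -- group theory
  have hcardFu : Fintype.card Fˣ = r - 1 := by rw [Fintype.card_units, hcardF]
  have hcardKu : Fintype.card Kˣ = q - 1 := by rw [Fintype.card_units, hcardK]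
  have hordα : orderOf α = r - 1 := by
    rw [orderOf_eq_card_of_forall_mem_zpowers hα, Nat.card_eq_fintype_card, hcardFu]
  have hord_pow : ∀ k : ℕ, k ∣ r - 1 → orderOf (α ^ k) = (r - 1) / k := by
    intro k hk; rw [orderOf_pow, hordα, Nat.gcd_eq_right hk]
  set θu : Fˣ := α ^ N with hθu
  have hordθ : orderOf θu = n := by rw [hθu, hord_pow N hN, hn]
  set B := Subgroup.zpowers θu with hB
  have hcardB : Nat.card B = n := by rw [hB, Nat.card_zpowers, hordθ]
  set φK : Kˣ →* Fˣ := Units.map (algebraMap K F : K →* F) with hφK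
  have hφKinj : Function.Injective φK :=
    Units.map_injective (f := (algebraMap K F : K →* F)) (algebraMap K F).injective
  set A := φK.range with hA_def
  have hcardA : Nat.card A = q - 1 := by
    rw [← Nat.card_congr (MonoidHom.ofInjective hφKinj).toEquiv,
      Nat.card_eq_fintype_card, hcardKu]
  have hrdivE : (r - 1) / e = q - 1 :=
    Nat.div_eq_of_eq_mul_right (Nat.pos_of_ne_zero he0) he.symm
  have hAzp : A = Subgroup.zpowers (α ^ e) := by
    have hle : A ≤ Subgroup.zpowers (α ^ e) := by
      rintro x ⟨y, rfl⟩
      have hx1 : (φK y) ^ (q - 1) = 1 := by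
        rw [← map_pow, ← hcardKu, pow_card_eq_one, map_one]
      obtain ⟨k, hk0⟩ := (mem_powers_iff_mem_zpowers (x := α)).mpr (hα (φK y))
      have hk : α ^ k = φK y := hk0
      have hdvd : r - 1 ∣ k * (q - 1) := by
        rw [← hordα, orderOf_dvd_iff_pow_eq_one, pow_mul, hk, hx1]
      have hek : e ∣ k := by
        rw [← he] at hdvd
        exact (Nat.mul_dvd_mul_iff_right (show 0 < q - 1 by omega)).mp hdvd
      obtain ⟨d, rfl⟩ := hek
      clear hk0
      exact Subgroup.mem_zpowers_iff.mpr ⟨(d : ℤ), by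
        rw [zpow_natCast, ← pow_mul, hk]⟩
    refine (Subgroup.eq_of_le_of_card_ge hle ?_)
    rw [Nat.card_zpowers, hord_pow e hedvd, hrdivE, hcardA]
  set D := Subgroup.zpowers (α ^ N₂) with hD
  have hcardD : Nat.card D = (r - 1) / N₂ := by
    rw [hD, Nat.card_zpowers, hord_pow N₂ hN₂r]
  have hjoin : A ⊔ B = D := by
    rw [hAzp, hB, hθu, zpowers_pow_sup, Nat.gcd_comm, ← hN₂, hD]
  -- the multiplication homomorphism
  set Φ : Kˣ × B →* Fˣ := MonoidHom.mk' (fun z => φK z.1 * (z.2 : Fˣ))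
    (fun a b => by
      simp only [Prod.fst_mul, Prod.snd_mul, map_mul, Subgroup.coe_mul]
      exact mul_mul_mul_comm _ _ _ _) with hΦ
  have hΦrange : Φ.range = D := by
    rw [← hjoin]
    ext x
    constructor
    · rintro ⟨⟨y, b⟩, rfl⟩
      exact Subgroup.mem_sup.mpr ⟨φK y, ⟨y, rfl⟩, b, b.2, rfl⟩
    · intro hx
      obtain ⟨u, hu, v, hv, huv⟩ := Subgroup.mem_sup.mp hx
      obtain ⟨y, hy⟩ := hu
      exact ⟨(y, ⟨v, hv⟩), by simp only [hΦ, MonoidHom.mk'_apply]; rw [hy, huv]⟩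
  set c := Nat.card Φ.ker with hc
  have hcount : (q - 1) * n = (r - 1) / N₂ * c := by
    have h1 : Nat.card (Kˣ × B) = Nat.card ((Kˣ × B) ⧸ Φ.ker) * c :=
      Subgroup.card_eq_card_quotient_mul_card_subgroup _
    have h2 : Nat.card ((Kˣ × B) ⧸ Φ.ker) = Nat.card D := by
      rw [← hΦrange]
      exact Nat.card_congr (QuotientGroup.quotientKerEquivRange Φ).toEquiv
    have h3 : Nat.card (Kˣ × B) = (q - 1) * n := by
      rw [Nat.card_prod, Nat.card_eq_fintype_card, hcardKu, hcardB]
    rw [← h3, h1, h2, hcardD]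
  have hNc : N * c = (q - 1) * N₂ := by
    have h4 : (q - 1) * n * N₂ = (r - 1) * c := by
      calc (q - 1) * n * N₂ = (r - 1) / N₂ * c * N₂ := by rw [hcount]
        _ = (r - 1) / N₂ * N₂ * c := by ring
        _ = (r - 1) * c := by rw [Nat.div_mul_cancel hN₂r]
    have h5 : n * (N * c) = n * ((q - 1) * N₂) := by
      calc n * (N * c) = n * N * c := by ring
        _ = (r - 1) * c := by rw [hnN]
        _ = (q - 1) * n * N₂ := h4.symm
        _ = n * ((q - 1) * N₂) := by ring
    exact Nat.eq_of_mul_eq_mul_left (Nat.pos_of_ne_zero hn0) h5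
  -- the additive character of F
  set ψ : F → ℂ := fun x => eP p (Algebra.trace (ZMod p) F x) with hψ
  set η := gaussPeriod p F α N₂ iβ with hη
  set W := codewordWeight K F ((θu : Fˣ) : F) n (β : F) with hW_def
  set Z := (Finset.univ.filter fun j : Fin n =>
    Algebra.trace K F ((β : F) * ((θu : Fˣ) : F) ^ (j : ℕ)) = 0).card with hZ_def
  have hWZnat : W + Z = n := by
    rw [hW_def, hZ_def]
    unfold codewordWeight
    have h := Finset.card_filter_add_card_filter_not
      (s := (Finset.univ : Finset (Fin n)))
      (p := fun j => Algebra.trace K F ((β : F) * ((θu : Fˣ) : F) ^ (j : ℕ)) ≠ 0)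
    simp only [ne_eq, not_not, Finset.card_univ, Fintype.card_fin] at h
    simpa using h
  -- orthogonality: inner sums over K
  have hinner : ∀ j : Fin n,
      ∑ y : K, ψ (algebraMap K F y * ((β : F) * ((θu : Fˣ) : F) ^ (j : ℕ)))
        = if Algebra.trace K F ((β : F) * ((θu : Fˣ) : F) ^ (j : ℕ)) = 0
          then (q : ℂ) else 0 := by
    intro j
    set x : F := (β : F) * ((θu : Fˣ) : F) ^ (j : ℕ) with hx
    have ht : ∀ y : K, Algebra.trace (ZMod p) F (algebraMap K F y * x)
        = Algebra.trace (ZMod p) K (y * Algebra.trace K F x) := by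
      intro y
      rw [← Algebra.trace_trace (S := K) (x := algebraMap K F y * x)]
      congr 1
      rw [← Algebra.smul_def, map_smul, smul_eq_mul]
    have h1 : ∀ y : K, ψ (algebraMap K F y * x)
        = eP p (Algebra.trace (ZMod p) K (y * Algebra.trace K F x)) := by
      intro y
      show eP p (Algebra.trace (ZMod p) F (algebraMap K F y * x)) = _
      rw [ht y]
    rw [Finset.sum_congr rfl (fun y _ => h1 y),
      sum_eP_trace p hp K (Algebra.trace K F x), hcardK]
  have hsum1 : ∑ j : Fin n, ∑ y : K,
      ψ (algebraMap K F y * ((β : F) * ((θu : Fˣ) : F) ^ (j : ℕ)))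
      = (q : ℂ) * (Z : ℂ) := by
    rw [Finset.sum_congr rfl (fun j _ => hinner j), Finset.sum_ite, Finset.sum_const,
      Finset.sum_const_zero, add_zero, nsmul_eq_mul, hZ_def]
    push_cast
    ring
  have hsum2 : ∀ j : Fin n,
      ∑ y : K, ψ (algebraMap K F y * ((β : F) * ((θu : Fˣ) : F) ^ (j : ℕ)))
        = 1 + ∑ u : Kˣ, ψ (algebraMap K F (u : K) * ((β : F) * ((θu : Fˣ) : F) ^ (j : ℕ))) := by
    intro j
    rw [sum_field_eq_zero_add_units
      (fun y => ψ (algebraMap K F y * ((β : F) * ((θu : Fˣ) : F) ^ (j : ℕ))))]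
    congr 1
    rw [map_zero, zero_mul, hψ]
    show eP p (Algebra.trace (ZMod p) F 0) = 1
    rw [map_zero, eP_zero]
  set S := ∑ j : Fin n, ∑ u : Kˣ,
    ψ (algebraMap K F (u : K) * ((β : F) * ((θu : Fˣ) : F) ^ (j : ℕ))) with hS_def
  have hQZ : (q : ℂ) * (Z : ℂ) = (n : ℂ) + S := by
    rw [← hsum1, Finset.sum_congr rfl (fun j _ => hsum2 j), Finset.sum_add_distrib,
      Finset.sum_const, Finset.card_univ, Fintype.card_fin, nsmul_eq_mul, mul_one, hS_def]
  -- rewrite S as a sum over Kˣ × B composed with Φ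
  set f : Fˣ → ℂ := fun w => ψ (((β * w : Fˣ) : F)) with hf
  have hterm : ∀ (u : Kˣ) (b : B),
      f (Φ (u, b)) = ψ (algebraMap K F (u : K) * ((β : F) * ((b : Fˣ) : F))) := by
    intro u b
    have hΦval : Φ (u, b) = φK u * (b : Fˣ) := rfl
    have harg : ((β * Φ (u, b) : Fˣ) : F)
        = algebraMap K F (u : K) * ((β : F) * ((b : Fˣ) : F)) := by
      rw [hΦval, Units.val_mul, Units.val_mul, hφK, Units.coe_map]
      show (β : F) * ((algebraMap K F) (u : K) * ((b : Fˣ) : F)) = _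
      ring
    show ψ ((β * Φ (u, b) : Fˣ) : F) = _
    rw [harg]
  have hreindex : ∀ u : Kˣ,
      ∑ j : Fin n, ψ (algebraMap K F (u : K) * ((β : F) * ((θu : Fˣ) : F) ^ (j : ℕ)))
        = ∑ b : B, f (Φ (u, b)) := by
    intro u
    apply Finset.sum_bij
      (fun (j : Fin n) _ => (⟨θu ^ (j : ℕ), Subgroup.mem_zpowers_iff.mpr
        ⟨((j : ℕ) : ℤ), by rw [zpow_natCast]⟩⟩ : B))
    · intro j _; exact Finset.mem_univ _
    · intro j₁ _ j₂ _ h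
      have h' : θu ^ (j₁ : ℕ) = θu ^ (j₂ : ℕ) := congrArg Subtype.val h
      have := pow_injOn_Iio_orderOf (x := θu)
        (by rw [hordθ]; exact Set.mem_Iio.mpr j₁.2)
        (by rw [hordθ]; exact Set.mem_Iio.mpr j₂.2) h'
      exact Fin.ext this
    · intro b _
      obtain ⟨k, hk⟩ := (mem_powers_iff_mem_zpowers (x := θu)).mpr b.2
      have hk' : θu ^ k = (b : Fˣ) := hk
      refine ⟨⟨k % n, Nat.mod_lt _ (Nat.pos_of_ne_zero hn0)⟩, Finset.mem_univ _, ?_⟩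
      apply Subtype.ext
      show θu ^ (k % n) = (b : Fˣ)
      rw [← hordθ, pow_mod_orderOf, hk']
    · intro j _
      rw [hterm]
      exact congrArg ψ (by push_cast; ring)
  have hScη : S = (c : ℂ) * η := by
    rw [hS_def, Finset.sum_comm, Finset.sum_congr rfl (fun u _ => hreindex u)]
    rw [← Fintype.sum_prod_type (f := fun z : Kˣ × B => f (Φ z))]
    rw [sum_comp_hom Φ f, ← hc]
    congr 1
    rw [Fintype.sum_equiv (Equiv.subtypeEquivRight (fun x => by rw [hΦrange]))
      (fun y : ↥Φ.range => f ↑y) (fun y : ↥D => f ↑y) (fun y => rfl)]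
    -- ∑ w : D, f w = η
    rw [hη]
    unfold gaussPeriod
    obtain ⟨j₀, hj₀⟩ := hiβ
    apply Finset.sum_bij (fun (w : D) _ => β * (w : Fˣ))
    · intro w _
      rw [Finset.mem_filter]
      refine ⟨Finset.mem_univ _, ?_⟩
      obtain ⟨k, hk⟩ := (mem_powers_iff_mem_zpowers (x := α ^ N₂)).mpr w.2
      have hk' : (α ^ N₂) ^ k = (w : Fˣ) := hk
      exact ⟨j₀ + k, by rw [hj₀, pow_add, mul_assoc, hk']⟩
    · intro w₁ _ w₂ _ h
      exact Subtype.ext (mul_left_cancel h)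
    · intro x hx
      obtain ⟨jx, hjx⟩ := (Finset.mem_filter.mp hx).2
      refine ⟨⟨β⁻¹ * x, ?_⟩, Finset.mem_univ _, by rw [mul_inv_cancel_left]⟩
      show β⁻¹ * x ∈ Subgroup.zpowers (α ^ N₂)
      have hbx : β⁻¹ * x = (α ^ N₂) ^ jx * ((α ^ N₂) ^ j₀)⁻¹ := by
        rw [hjx, hj₀, mul_inv_rev, mul_assoc, inv_mul_cancel_left, mul_comm]
      rw [hbx]
      exact mul_mem (Subgroup.mem_zpowers_iff.mpr ⟨(jx : ℤ), by rw [zpow_natCast]⟩)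
        (inv_mem (Subgroup.mem_zpowers_iff.mpr ⟨(j₀ : ℤ), by rw [zpow_natCast]⟩))
    · intro w _
      rw [hf, hψ]
      rfl
  -- final arithmetic
  have hWZ' : (W : ℂ) + (Z : ℂ) = (n : ℂ) := by exact_mod_cast hWZnat
  have hQZ' : (q : ℂ) * (Z : ℂ) = (n : ℂ) + (c : ℂ) * η := by rw [hQZ, hScη]
  have hNn' : (N : ℂ) * (n : ℂ) = (r : ℂ) - 1 := by
    have h := congrArg (fun t : ℕ => (t : ℂ)) hnN
    push_cast [Nat.cast_sub (show 1 ≤ r by omega)] at h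
    linear_combination h
  have hNc' : (N : ℂ) * (c : ℂ) = ((q : ℂ) - 1) * (N₂ : ℂ) := by
    have h := congrArg (fun t : ℕ => (t : ℂ)) hNc
    push_cast [Nat.cast_sub (show 1 ≤ q by omega)] at h
    linear_combination h
  have hqN0 : (q : ℂ) * (N : ℂ) ≠ 0 :=
    mul_ne_zero (Nat.cast_ne_zero.mpr (by omega)) (Nat.cast_ne_zero.mpr hN0)
  constructor
  · rw [div_mul_eq_mul_div, eq_div_iff hqN0]
    linear_combination ((q : ℂ) * (N : ℂ)) * hWZ' - (N : ℂ) * hQZ'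
      + ((q : ℂ) - 1) * hNn' - η * hNc'
  · rw [div_mul_eq_mul_div, eq_div_iff hqN0]
    linear_combination ((q : ℂ) * (N : ℂ)) * hWZ' - (N : ℂ) * hQZ'
      + ((q : ℂ) - 1) * hNn' - η * hNc'
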